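/- Every surjective continuous linear operator L : 𝒳 → 𝒴 between real Banach spaces admits a continuous (not necessarily linear) right inverse: there is a continuous map g : 𝒴 → 𝒳 with L(g(y)) = y for all y ∈ 𝒴, which moreover maps bounded subsets of 𝒴 to bounded subsets of 𝒳. -/

import Mathlib

open Set Function Metric Bornology Filter

/-- Continuous approximate right inverse, built with a partition of unity. -/
lemma bg_approx {𝒳 𝒴 : Type*} [NormedAddCommGroup 𝒳] [NormedSpace ℝ 𝒳] [CompleteSpace 𝒳]
    [NormedAddCommGroup 𝒴] [NormedSpace ℝ 𝒴] [CompleteSpace 𝒴]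
    (L : 𝒳 →L[ℝ] 𝒴) (hL : Function.Surjective L) :
    ∃ (H : 𝒴 → 𝒳) (C : ℝ), 0 < C ∧ Continuous H ∧
      (∀ y, ‖H y‖ ≤ C * ‖y‖) ∧ ∀ y, ‖L (H y) - y‖ ≤ (1/2) * ‖y‖ := by
  classical
  obtain ⟨C, hC0, hC⟩ := ContinuousLinearMap.exists_preimage_norm_le L hL
  choose xu hxu hxu_norm using hC
  -- work on the subtype of nonzero vectors
  set W : Type _ := {y : 𝒴 // y ≠ 0} with hW
  set U : W → Set W := fun u => {v : W | ‖(v : 𝒴) - (u : 𝒴)‖ < ‖(u : 𝒴)‖ / 4} with hU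
  have hUopen : ∀ u, IsOpen (U u) := by
    intro u
    have : U u = (fun v : W => (v : 𝒴)) ⁻¹' Metric.ball (u : 𝒴) (‖(u : 𝒴)‖ / 4) := by
      ext v; simp [U, Metric.mem_ball, dist_eq_norm]
    rw [this]
    exact Metric.isOpen_ball.preimage continuous_subtype_val
  have hUcover : (univ : Set W) ⊆ ⋃ u, U u := by
    intro v _
    refine mem_iUnion.2 ⟨v, ?_⟩
    simp only [U, mem_setOf_eq, sub_self, norm_zero]
    have : (0 : ℝ) < ‖(v : 𝒴)‖ := norm_pos_iff.2 v.2
    linarith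
  obtain ⟨f, hf⟩ := PartitionOfUnity.exists_isSubordinate isClosed_univ U hUopen hUcover
  set h' : W → 𝒳 := fun v => ∑ᶠ u : W, f u v • xu (u : 𝒴) with hh'
  have h'cont : Continuous h' :=
    f.continuous_finsum_smul fun u x _ => continuousAt_const
  -- key pointwise facts
  have key : ∀ v : W, ‖h' v‖ ≤ (4 * C / 3) * ‖(v : 𝒴)‖ ∧
      ‖L (h' v) - (v : 𝒴)‖ ≤ (1/2) * ‖(v : 𝒴)‖ := by
    intro v
    have hvpos : (0 : ℝ) < ‖(v : 𝒴)‖ := norm_pos_iff.2 v.2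
    have hfin : {u : W | f u v ≠ 0}.Finite := by
      have := f.locallyFinite.point_finite v
      simpa [Function.support] using this
    set T : Finset W := hfin.toFinset with hT
    have hmemT : ∀ u : W, f u v ≠ 0 ↔ u ∈ T := by
      intro u; simp [T, hfin.mem_toFinset]
    -- facts about members of T
    have hunorm : ∀ u ∈ T, ‖(u : 𝒴)‖ ≤ (4/3) * ‖(v : 𝒴)‖ ∧
        ‖(u : 𝒴) - (v : 𝒴)‖ ≤ (1/2) * ‖(v : 𝒴)‖ := by
      intro u hu
      have hne : f u v ≠ 0 := (hmemT u).2 hu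
      have hvU : v ∈ U u := hf u (subset_closure (by simpa [Function.mem_support] using hne))
      have h1 : ‖(v : 𝒴) - (u : 𝒴)‖ < ‖(u : 𝒴)‖ / 4 := hvU
      have h2 : ‖(u : 𝒴)‖ - ‖(v : 𝒴)‖ ≤ ‖(u : 𝒴) - (v : 𝒴)‖ := norm_sub_norm_le _ _
      have h3 : ‖(u : 𝒴) - (v : 𝒴)‖ = ‖(v : 𝒴) - (u : 𝒴)‖ := norm_sub_rev _ _
      constructor <;> [skip; rw [h3]] <;> rw [h3] at h2 <;> linarith
    have hnonneg : ∀ u : W, 0 ≤ f u v := fun u => f.nonneg u v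
    have hsupp1 : (Function.support fun u : W => f u v • xu (u : 𝒴)) ⊆ ↑T := by
      intro u hu
      have : f u v ≠ 0 := fun h => hu (by simp [Function.mem_support, h])
      exact (hmemT u).1 this
    have hsum1 : h' v = ∑ u ∈ T, f u v • xu (u : 𝒴) :=
      finsum_eq_sum_of_support_subset _ hsupp1
    have hone : ∑ u ∈ T, f u v = 1 := by
      have h1 : ∑ᶠ u : W, f u v = 1 := f.sum_eq_one (mem_univ v)
      have h2 : (Function.support fun u : W => f u v) ⊆ ↑T := fun u hu => (hmemT u).1 hu
      rw [← finsum_eq_sum_of_support_subset _ h2]; exact h1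
    constructor
    · rw [hsum1]
      calc ‖∑ u ∈ T, f u v • xu (u : 𝒴)‖ ≤ ∑ u ∈ T, f u v * (C * ((4/3) * ‖(v : 𝒴)‖)) := by
            refine (norm_sum_le _ _).trans (Finset.sum_le_sum fun u hu => ?_)
            rw [norm_smul, Real.norm_eq_abs, abs_of_nonneg (hnonneg u)]
            refine mul_le_mul_of_nonneg_left ?_ (hnonneg u)
            exact (hxu_norm _).trans
              (mul_le_mul_of_nonneg_left (hunorm u hu).1 hC0.le)
        _ = (∑ u ∈ T, f u v) * (C * ((4/3) * ‖(v : 𝒴)‖)) := by rw [Finset.sum_mul]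
        _ = (4 * C / 3) * ‖(v : 𝒴)‖ := by rw [hone]; ring
    · have hLh : L (h' v) = ∑ u ∈ T, f u v • (u : 𝒴) := by
        rw [hsum1, map_sum]
        exact Finset.sum_congr rfl fun u _ => by rw [map_smul, hxu]
      have hv : (v : 𝒴) = ∑ u ∈ T, f u v • (v : 𝒴) := by
        rw [← Finset.sum_smul, hone, one_smul]
      rw [hLh]
      nth_rewrite 1 [hv]
      rw [← Finset.sum_sub_distrib]
      calc ‖∑ u ∈ T, (f u v • (u : 𝒴) - f u v • (v : 𝒴))‖
          ≤ ∑ u ∈ T, f u v * ((1/2) * ‖(v : 𝒴)‖) := by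
            refine (norm_sum_le _ _).trans (Finset.sum_le_sum fun u hu => ?_)
            rw [← smul_sub, norm_smul, Real.norm_eq_abs, abs_of_nonneg (hnonneg u)]
            exact mul_le_mul_of_nonneg_left (hunorm u hu).2 (hnonneg u)
        _ = (∑ u ∈ T, f u v) * ((1/2) * ‖(v : 𝒴)‖) := by rw [Finset.sum_mul]
        _ = (1/2) * ‖(v : 𝒴)‖ := by rw [hone, one_mul]
  -- assemble H on all of 𝒴
  refine ⟨fun y => if h : y = 0 then 0 else h' ⟨y, h⟩, 4 * C / 3, by positivity, ?_, ?_, ?_⟩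
  · rw [continuous_iff_continuousAt]
    intro y
    by_cases hy : y = 0
    · subst hy
      have hb : ∀ z : 𝒴, ‖(if h : z = 0 then 0 else h' ⟨z, h⟩ : 𝒳)‖ ≤ (4 * C / 3) * ‖z‖ := by
        intro z
        by_cases hz : z = 0
        · simp [hz]
        · rw [dif_neg hz]; exact (key ⟨z, hz⟩).1
      have : Filter.Tendsto (fun z : 𝒴 => if h : z = 0 then 0 else h' ⟨z, h⟩) (nhds 0)
          (nhds 0) := by
        refine squeeze_zero_norm hb ?_
        have : Filter.Tendsto (fun z : 𝒴 => (4 * C / 3) * ‖z‖) (nhds 0) (nhds ((4 * C / 3) * ‖(0:𝒴)‖)) :=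
          (continuous_const.mul continuous_norm).tendsto 0
        simpa using this
      simpa [ContinuousAt] using this
    · have hopen : IsOpen {z : 𝒴 | z ≠ 0} := isOpen_ne
      refine ContinuousOn.continuousAt ?_ (hopen.mem_nhds hy)
      rw [continuousOn_iff_continuous_restrict]
      have : domRestrict {z : 𝒴 | z ≠ 0} (fun y => if h : y = 0 then 0 else h' ⟨y, h⟩)
          = fun v : {z : 𝒴 | z ≠ 0} => h' ⟨v.1, v.2⟩ := by
        funext v; simp only [domRestrict_apply, dif_neg v.2]
      rw [this]
      exact h'cont.comp (by fun_prop)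
  · intro y
    by_cases hy : y = 0
    · simp [hy]
    · beta_reduce; rw [dif_neg hy]; exact (key ⟨y, hy⟩).1
  · intro y
    by_cases hy : y = 0
    · simp [hy]
    · beta_reduce; rw [dif_neg hy]; exact (key ⟨y, hy⟩).2

/-- **Bartle–Graves theorem.** Every surjective continuous linear operator `L : 𝒳 → 𝒴`
between real Banach spaces admits a continuous (not necessarily linear) right inverse,
which moreover maps bounded subsets of `𝒴` to bounded subsets of `𝒴`. -/
theorem bartle_graves
    {𝒳 𝒴 : Type*} [NormedAddCommGroup 𝒳] [NormedSpace ℝ 𝒳] [CompleteSpace 𝒳]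
    [NormedAddCommGroup 𝒴] [NormedSpace ℝ 𝒴] [CompleteSpace 𝒴]
    (L : 𝒳 →L[ℝ] 𝒴) (hL : Function.Surjective L) :
    ∃ g : 𝒴 → 𝒳, Continuous g ∧ (∀ y : 𝒴, L (g y) = y) ∧
      ∀ s : Set 𝒴, Bornology.IsBounded s → Bornology.IsBounded (g '' s) := by
  obtain ⟨H, C, hC0, hHc, hHnorm, hHerr⟩ := bg_approx L hL
  set S : 𝒴 → 𝒴 := fun z => z - L (H z) with hSdef
  have hSc : Continuous S := continuous_id.sub (L.continuous.comp hHc)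
  have hSnorm : ∀ z, ‖S z‖ ≤ (1/2) * ‖z‖ := by
    intro z
    have : S z = -(L (H z) - z) := by rw [neg_sub]
    rw [this, norm_neg]; exact hHerr z
  have hiter : ∀ n (y : 𝒴), ‖S^[n] y‖ ≤ (1/2)^n * ‖y‖ := by
    intro n
    induction n with
    | zero => intro y; simp
    | succ n ih =>
      intro y
      rw [Function.iterate_succ_apply']
      calc ‖S (S^[n] y)‖ ≤ (1/2) * ‖S^[n] y‖ := hSnorm _
        _ ≤ (1/2) * ((1/2)^n * ‖y‖) := by
            have := ih y; linarith
        _ = (1/2)^(n+1) * ‖y‖ := by ring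
  have htermnorm : ∀ n (y : 𝒴), ‖H (S^[n] y)‖ ≤ C * ‖y‖ * (1/2)^n := by
    intro n y
    calc ‖H (S^[n] y)‖ ≤ C * ‖S^[n] y‖ := hHnorm _
      _ ≤ C * ((1/2)^n * ‖y‖) := by
          exact mul_le_mul_of_nonneg_left (hiter n y) hC0.le
      _ = C * ‖y‖ * (1/2)^n := by ring
  have hgeo : Summable fun n : ℕ => ((1:ℝ)/2)^n :=
    summable_geometric_of_lt_one (by norm_num) (by norm_num)
  have hsummable : ∀ y : 𝒴, Summable fun n => H (S^[n] y) := by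
    intro y
    exact Summable.of_norm_bounded (hgeo.mul_left (C * ‖y‖)) (htermnorm · y)
  set g : 𝒴 → 𝒳 := fun y => ∑' n, H (S^[n] y) with hgdef
  have hSlim : ∀ y : 𝒴, Tendsto (fun N => S^[N] y) atTop (nhds 0) := by
    intro y
    refine squeeze_zero_norm (fun N => hiter N y) ?_
    have := (tendsto_pow_atTop_nhds_zero_of_lt_one (by norm_num : (0:ℝ) ≤ 1/2)
      (by norm_num)).mul_const ‖y‖
    simpa using this
  have hgnorm : ∀ y : 𝒴, ‖g y‖ ≤ 2 * C * ‖y‖ := by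
    intro y
    have hgs : HasSum (fun n : ℕ => C * ‖y‖ * ((1:ℝ)/2)^n) (C * ‖y‖ * (1 - 1/2)⁻¹) :=
      (hasSum_geometric_of_lt_one (by norm_num) (by norm_num)).mul_left _
    have := tsum_of_norm_bounded hgs (htermnorm · y)
    calc ‖g y‖ ≤ C * ‖y‖ * (1 - 1/2)⁻¹ := this
      _ = 2 * C * ‖y‖ := by ring
  refine ⟨g, ?_, ?_, ?_⟩
  · rw [continuous_iff_continuousAt]
    intro y₀
    have hball : Metric.ball (0:𝒴) (‖y₀‖ + 1) ∈ nhds y₀ :=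
      Metric.isOpen_ball.mem_nhds (by simp [Metric.mem_ball, dist_eq_norm])
    refine ContinuousOn.continuousAt ?_ hball
    refine continuousOn_tsum (fun n => ?_) (hgeo.mul_left (C * (‖y₀‖ + 1))) ?_
    · exact (hHc.comp (hSc.iterate n)).continuousOn
    · intro n y hy
      have hynorm : ‖y‖ ≤ ‖y₀‖ + 1 := by
        have := Metric.mem_ball.1 hy
        rw [dist_eq_norm, sub_zero] at this
        linarith
      calc ‖H (S^[n] y)‖ ≤ C * ‖y‖ * (1/2)^n := htermnorm n y
        _ ≤ C * (‖y₀‖ + 1) * (1/2)^n := by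
            have h1 : (0:ℝ) ≤ (1/2:ℝ)^n := by positivity
            exact mul_le_mul_of_nonneg_right
              (mul_le_mul_of_nonneg_left hynorm hC0.le) h1
  · intro y
    have hLg : L (g y) = ∑' n, L (H (S^[n] y)) := L.map_tsum (hsummable y)
    have hterm : ∀ n, L (H (S^[n] y)) = S^[n] y - S^[n+1] y := by
      intro n
      rw [Function.iterate_succ_apply']
      simp [S]
    have hnormsum : Summable fun n => ‖L (H (S^[n] y))‖ := by
      refine Summable.of_nonneg_of_le (fun n => norm_nonneg _) (fun n => ?_)
        (hgeo.mul_left (‖L‖ * (C * ‖y‖)))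
      calc ‖L (H (S^[n] y))‖ ≤ ‖L‖ * ‖H (S^[n] y)‖ := L.le_opNorm _
        _ ≤ ‖L‖ * (C * ‖y‖ * (1/2)^n) :=
            mul_le_mul_of_nonneg_left (htermnorm n y) (norm_nonneg _)
        _ = ‖L‖ * (C * ‖y‖) * (1/2)^n := by ring
    have hHS : HasSum (fun n => L (H (S^[n] y))) y := by
      rw [hasSum_iff_tendsto_nat_of_summable_norm hnormsum]
      have heq : ∀ N, ∑ n ∈ Finset.range N, L (H (S^[n] y)) = y - S^[N] y := by
        intro N
        calc ∑ n ∈ Finset.range N, L (H (S^[n] y))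
            = ∑ n ∈ Finset.range N, (S^[n] y - S^[n+1] y) :=
              Finset.sum_congr rfl fun n _ => hterm n
          _ = S^[0] y - S^[N] y := Finset.sum_range_sub' (fun n => S^[n] y) N
          _ = y - S^[N] y := by simp
      simp_rw [heq]
      simpa using tendsto_const_nhds.sub (hSlim y)
    rw [hLg, hHS.tsum_eq]
  · intro s hs
    obtain ⟨R, hR⟩ := isBounded_iff_forall_norm_le.1 hs
    refine isBounded_iff_forall_norm_le.2 ⟨2 * C * R, ?_⟩
    rintro x ⟨y, hy, rfl⟩
    calc ‖g y‖ ≤ 2 * C * ‖y‖ := hgnorm y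
      _ ≤ 2 * C * R := by
          have := hR y hy
          nlinarith [norm_nonneg y]
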